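/- Let d be an odd positive integer, λ, α complex numbers, and f : ℤ/dℤ → ℂ a function whose Fourier transform satisfies f̂ = α·f. Let F = f² (pointwise square). Then the following are equivalent: (i) (f ∗ f)(2k) = λ f(k)² for all k ∈ ℤ/dℤ; (ii) F̂(2k) = (α²λ/√d) F(k) for all k ∈ ℤ/dℤ. -/

import Mathlib

open Finset

/-- Convolution of two functions on `ℤ/dℤ`. -/
noncomputable def conv {d : ℕ} [NeZero d] (f g : ZMod d → ℂ) (k : ZMod d) : ℂ :=
  ∑ l : ZMod d, f l * g (k - l)

/-- Fourier transform of a function on `ℤ/dℤ`. -/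
noncomputable def dft {d : ℕ} [NeZero d] (f : ZMod d → ℂ) (k : ZMod d) : ℂ :=
  (1 / (Real.sqrt d : ℂ)) * ∑ l : ZMod d,
    Complex.exp (-2 * (Real.pi : ℂ) * Complex.I * (k.val : ℂ) * (l.val : ℂ) / d) * f l

namespace ConvAux

variable {d : ℕ} [NeZero d]

noncomputable def zeta (d : ℕ) : ℂ := Complex.exp (-2 * (Real.pi : ℂ) * Complex.I / d)

lemma zeta_pow_d : zeta d ^ d = 1 := by
  rw [zeta, ← Complex.exp_nat_mul]
  have hd : (d : ℂ) ≠ 0 := Nat.cast_ne_zero.mpr (NeZero.ne d)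
  have h : (d : ℂ) * (-2 * (Real.pi : ℂ) * Complex.I / d) = ((-1 : ℤ) : ℂ) * (2 * Real.pi * Complex.I) := by
    field_simp; ring
  rw [h, Complex.exp_int_mul_two_pi_mul_I]

lemma zeta_pow_mod (n : ℕ) : zeta d ^ n = zeta d ^ (n % d) :=
  pow_eq_pow_mod n zeta_pow_d

lemma isPrimitiveRoot_zeta : IsPrimitiveRoot (zeta d) d := by
  have h := Complex.isPrimitiveRoot_exp d (NeZero.ne d)
  have : zeta d = (Complex.exp (2 * Real.pi * Complex.I / d))⁻¹ := by
    rw [zeta, ← Complex.exp_neg]; ring_nf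
  rw [this]
  exact h.inv

noncomputable def E (x : ZMod d) : ℂ := zeta d ^ x.val

lemma E_mul_val (a b : ZMod d) : E (a * b) = zeta d ^ (a.val * b.val) := by
  rw [E, ZMod.val_mul, ← zeta_pow_mod]

lemma E_add (x y : ZMod d) : E (x + y) = E x * E y := by
  rw [E, E, E, ZMod.val_add, ← zeta_pow_mod, pow_add]

lemma E_zero : E (0 : ZMod d) = 1 := by simp [E]

lemma exp_eq (a b : ZMod d) :
    Complex.exp (-2 * (Real.pi : ℂ) * Complex.I * (a.val : ℂ) * (b.val : ℂ) / d) = E (a * b) := by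
  rw [E_mul_val, zeta, ← Complex.exp_nat_mul]
  congr 1
  push_cast
  ring

lemma dft_eq (f : ZMod d → ℂ) (k : ZMod d) :
    dft f k = (1 / (Real.sqrt d : ℂ)) * ∑ l : ZMod d, E (k * l) * f l := by
  rw [dft]
  congr 1
  exact Finset.sum_congr rfl fun l _ => by rw [exp_eq]

lemma sum_val_eq (g : ℕ → ℂ) : ∑ j : ZMod d, g j.val = ∑ i ∈ range d, g i := by
  apply Finset.sum_bij' (fun (j : ZMod d) _ => j.val) (fun (i : ℕ) _ => (i : ZMod d))
  · intro j _; exact Finset.mem_range.mpr (ZMod.val_lt j)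
  · intro i _; exact Finset.mem_univ _
  · intro j _; exact ZMod.natCast_rightInverse j
  · intro i hi; exact ZMod.val_cast_of_lt (Finset.mem_range.mp hi)
  · intro j _; rfl

lemma orth (c : ZMod d) : ∑ j : ZMod d, E (j * c) = if c = 0 then (d : ℂ) else 0 := by
  have hE : ∀ j : ZMod d, E (j * c) = (zeta d ^ c.val) ^ j.val := by
    intro j; rw [E_mul_val, ← pow_mul, Nat.mul_comm, pow_mul]
  simp_rw [hE]
  rw [sum_val_eq (fun i => (zeta d ^ c.val) ^ i)]
  by_cases hc : c = 0
  · simp [hc]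
  · rw [if_neg hc]
    have hw : zeta d ^ c.val ≠ 1 :=
      isPrimitiveRoot_zeta.pow_ne_one_of_pos_of_lt (ZMod.val_pos.mpr hc).ne' (ZMod.val_lt c)
    rw [geom_sum_eq hw]
    have : (zeta d ^ c.val) ^ d = 1 := by
      rw [← pow_mul, Nat.mul_comm, pow_mul, zeta_pow_d, one_pow]
    rw [this]; simp

lemma sqrtd_ne_zero : ((Real.sqrt d : ℝ) : ℂ) ≠ 0 := by
  have : (0:ℝ) < Real.sqrt d := Real.sqrt_pos.mpr (by exact_mod_cast Nat.pos_of_ne_zero (NeZero.ne d))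
  exact_mod_cast this.ne'

lemma sqrtd_sq : ((Real.sqrt d : ℝ) : ℂ) * ((Real.sqrt d : ℝ) : ℂ) = (d : ℂ) := by
  have : Real.sqrt d * Real.sqrt d = (d : ℝ) := Real.mul_self_sqrt (Nat.cast_nonneg d)
  exact_mod_cast congrArg Complex.ofReal this

/-- The key identity: `√d · F̂(m) = (f̂ ∗ f̂)(m)` where `F = f²`. -/
lemma key (f F : ZMod d → ℂ) (hF : ∀ k, F k = f k ^ 2) (m : ZMod d) :
    ((Real.sqrt d : ℝ) : ℂ) * dft F m = conv (dft f) (dft f) m := by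
  have hd : (d : ℂ) ≠ 0 := Nat.cast_ne_zero.mpr (NeZero.ne d)
  set T : ZMod d → ZMod d → ZMod d → ℂ :=
    fun j a b => E (m * b) * E (j * (a - b)) * (f a * f b) with hT
  have hs : ∀ j : ZMod d, dft f j * dft f (m - j)
      = (1 / (d : ℂ)) * ∑ a : ZMod d, ∑ b : ZMod d, T j a b := by
    intro j
    rw [dft_eq, dft_eq, mul_mul_mul_comm, Finset.sum_mul_sum]
    congr 1
    · rw [div_mul_div_comm, one_mul, sqrtd_sq]
    · apply Finset.sum_congr rfl; intro a _
      apply Finset.sum_congr rfl; intro b _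
      have h1 : m * b + j * (a - b) = j * a + (m - j) * b := by ring
      rw [hT]; dsimp only
      rw [← E_add, h1, E_add]; ring
  rw [conv]
  simp_rw [hs]
  rw [← Finset.mul_sum]
  have hswap : ∑ j : ZMod d, ∑ a : ZMod d, ∑ b : ZMod d, T j a b
      = ∑ a : ZMod d, ∑ b : ZMod d, ∑ j : ZMod d, T j a b := by
    rw [Finset.sum_comm]
    exact Finset.sum_congr rfl fun a _ => Finset.sum_comm
  rw [hswap]
  have hinner : ∀ a b : ZMod d, ∑ j : ZMod d, T j a b
      = E (m * b) * (f a * f b) * (if a - b = 0 then (d:ℂ) else 0) := by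
    intro a b
    rw [← orth (a - b)]
    rw [Finset.mul_sum]
    apply Finset.sum_congr rfl; intro j _
    rw [hT]; dsimp only; ring
  simp_rw [hinner]
  have h2 : ∀ a : ZMod d, ∑ b : ZMod d,
      E (m * b) * (f a * f b) * (if a - b = 0 then (d:ℂ) else 0)
      = (d:ℂ) * (E (m * a) * f a ^ 2) := by
    intro a
    rw [Finset.sum_eq_single a]
    · rw [sub_self, if_pos rfl]; ring
    · intro b _ hb
      rw [if_neg (sub_ne_zero.mpr (Ne.symm hb)), mul_zero]
    · intro h; exact absurd (Finset.mem_univ a) h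
  simp_rw [h2]
  rw [← Finset.mul_sum, ← mul_assoc, one_div, inv_mul_cancel₀ hd, one_mul]
  rw [dft_eq, ← mul_assoc, mul_one_div, div_self sqrtd_ne_zero, one_mul]
  exact Finset.sum_congr rfl fun a _ => by rw [hF]

/-- Fourier inversion: if `dft f = 0` then `f = 0`. -/
lemma dft_eq_zero (f : ZMod d → ℂ) (h : ∀ k, dft f k = 0) : ∀ j, f j = 0 := by
  intro j
  have hd : (d : ℂ) ≠ 0 := Nat.cast_ne_zero.mpr (NeZero.ne d)
  have h0 : ∑ k : ZMod d, E (k * (-j)) * dft f k = 0 := by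
    simp [h]
  have hexp : ∀ k : ZMod d, E (k * (-j)) * dft f k
      = (1 / (Real.sqrt d : ℂ)) * ∑ a : ZMod d, E (k * (a - j)) * f a := by
    intro k
    rw [dft_eq, mul_left_comm]
    congr 1
    rw [Finset.mul_sum]
    refine Finset.sum_congr rfl fun a _ => ?_
    rw [← mul_assoc, ← E_add]
    congr 2
    ring
  simp_rw [hexp] at h0
  rw [← Finset.mul_sum, Finset.sum_comm] at h0
  have horth : ∀ a : ZMod d, ∑ k : ZMod d, E (k * (a - j)) * f a
      = (if a - j = 0 then (d:ℂ) else 0) * f a := by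
    intro a
    rw [← Finset.sum_mul, orth]
  simp_rw [horth] at h0
  rw [Finset.sum_eq_single j] at h0
  · rw [sub_self, if_pos rfl] at h0
    rcases mul_eq_zero.mp h0 with h1 | h1
    · exact absurd h1 (one_div_ne_zero sqrtd_ne_zero)
    · rcases mul_eq_zero.mp h1 with h2 | h2
      · exact absurd h2 hd
      · exact h2
  · intro a _ haj
    rw [if_neg (sub_ne_zero.mpr haj), zero_mul]
  · intro h'; exact absurd (Finset.mem_univ j) h'

end ConvAux

open ConvAux in
/-- Lemma 3.1: if `f̂ = αf` and `F = f²` then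
`f∗f(2t) = λf(t)² ⟺ F̂(2t) = (α²λ/√d) F(t)`. -/
theorem convolution_eq_iff_square_fourier (d : ℕ) [NeZero d] (hd : Odd d)
    (lam α : ℂ) (f : ZMod d → ℂ) (hf : ∀ k : ZMod d, dft f k = α * f k)
    (F : ZMod d → ℂ) (hF : ∀ k : ZMod d, F k = f k ^ 2) :
    (∀ k : ZMod d, conv f f (2 * k) = lam * f k ^ 2) ↔
      (∀ k : ZMod d, dft F (2 * k) = α ^ 2 * lam / (Real.sqrt d : ℂ) * F k) := by
  have hconv : ∀ m : ZMod d, conv (dft f) (dft f) m = α ^ 2 * conv f f m := by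
    intro m
    rw [conv, conv, Finset.mul_sum]
    apply Finset.sum_congr rfl; intro l _
    rw [hf, hf]; ring
  have hkey : ∀ m : ZMod d, ((Real.sqrt d : ℝ) : ℂ) * dft F m = α ^ 2 * conv f f m := by
    intro m; rw [key f F hF m, hconv]
  have hs : ((Real.sqrt d : ℝ) : ℂ) ≠ 0 := sqrtd_ne_zero
  constructor
  · intro h k
    have hk := hkey (2 * k)
    rw [h k] at hk
    rw [hF]
    field_simp
    linear_combination hk
  · intro h k
    have hk := hkey (2 * k)
    rw [h k, hF] at hk
    have h2 : α ^ 2 * conv f f (2 * k) = α ^ 2 * (lam * f k ^ 2) := by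
      rw [← hk]
      field_simp
    by_cases hα : α = 0
    · have hf0 : ∀ j, f j = 0 := by
        apply dft_eq_zero
        intro j; rw [hf, hα, zero_mul]
      rw [conv]
      simp [hf0]
    · exact mul_left_cancel₀ (pow_ne_zero 2 hα) h2
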